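/- Let g, h : (0,∞) → ℂ be measurable functions that are Lebesgue integrable on (0,∞). Then (∫₀^∞ g(x) dx) · (∫₀^∞ h(x) dx) = ∫₀^∞ ∫₀^∞ g(x)·h(x+t) dx dt + ∫₀^∞ ∫₀^∞ h(x)·g(x+t) dx dt. (This is the auxiliary identity (40) proved in the paper, obtained by noting that the right-hand side equals −∫₀^∞ (G'(x)H(x) + G(x)H'(x)) dx = G(0)H(0) for the tail integrals G(x) = ∫_x^∞ g and H(x) = ∫_x^∞ h.) -/
import Mathlib


open MeasureTheory Set

private lemma aux_half (g h : ℝ → ℂ)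
    (hg : IntegrableOn g (Ioi 0)) (hh : IntegrableOn h (Ioi 0)) :
    ∫ p in {p : ℝ × ℝ | p.1 < p.2} ∩ (Ioi (0:ℝ) ×ˢ Ioi (0:ℝ)),
        g p.1 * h p.2 ∂((volume : Measure ℝ).prod volume) =
      ∫ t in Ioi (0:ℝ), ∫ x in Ioi (0:ℝ), g x * h (x + t) := by
  set ρ : Measure (ℝ × ℝ) := (volume : Measure ℝ).prod volume with hρ
  set e : ℝ × ℝ → ℝ × ℝ := fun z => (z.1, z.1 + z.2) with he
  have mp : MeasurePreserving e ρ ρ :=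
    measurePreserving_prod_add (volume : Measure ℝ) volume
  have emb : MeasurableEmbedding e :=
    (MeasurableEquiv.shearAddRight ℝ).measurableEmbedding
  have hpre : e ⁻¹' ({p : ℝ × ℝ | p.1 < p.2} ∩ (Ioi (0:ℝ) ×ˢ Ioi (0:ℝ)))
      = Ioi (0:ℝ) ×ˢ Ioi (0:ℝ) := by
    ext ⟨x, t⟩
    simp only [Set.mem_preimage, Set.mem_inter_iff, Set.mem_setOf_eq, Set.mem_prod,
      Set.mem_Ioi, he]
    constructor
    · rintro ⟨h1, h2, h3⟩; exact ⟨h2, by linarith⟩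
    · rintro ⟨h1, h2⟩; exact ⟨by linarith, h1, by linarith⟩
  have key := mp.setIntegral_preimage_emb emb (fun p : ℝ × ℝ => g p.1 * h p.2)
    ({p : ℝ × ℝ | p.1 < p.2} ∩ (Ioi (0:ℝ) ×ˢ Ioi (0:ℝ)))
  rw [hpre] at key
  rw [← key]
  have hprodmeas : ρ.restrict (Ioi (0:ℝ) ×ˢ Ioi (0:ℝ))
      = (volume.restrict (Ioi (0:ℝ))).prod (volume.restrict (Ioi (0:ℝ))) := by
    rw [Measure.prod_restrict]
  have hint : Integrable (fun p : ℝ × ℝ => g p.1 * h (p.1 + p.2))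
      ((volume.restrict (Ioi (0:ℝ))).prod (volume.restrict (Ioi (0:ℝ)))) := by
    have h1 : Integrable (fun p : ℝ × ℝ => g p.1 * h p.2)
        ((volume.restrict (Ioi (0:ℝ))).prod (volume.restrict (Ioi (0:ℝ)))) :=
      hg.mul_prod hh
    have h2 : Integrable (fun p : ℝ × ℝ => g p.1 * h p.2)
        (ρ.restrict ({p : ℝ × ℝ | p.1 < p.2} ∩ (Ioi (0:ℝ) ×ˢ Ioi (0:ℝ)))) := by
      rw [← Measure.restrict_restrict
        (measurableSet_lt measurable_fst measurable_snd)]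
      rw [hprodmeas]
      exact h1.restrict
    have mp' : MeasurePreserving e (ρ.restrict (Ioi (0:ℝ) ×ˢ Ioi (0:ℝ)))
        (ρ.restrict ({p : ℝ × ℝ | p.1 < p.2} ∩ (Ioi (0:ℝ) ×ˢ Ioi (0:ℝ)))) := by
      have := mp.restrict_preimage_emb emb
        ({p : ℝ × ℝ | p.1 < p.2} ∩ (Ioi (0:ℝ) ×ˢ Ioi (0:ℝ)))
      rwa [hpre] at this
    have h3 := (mp'.integrable_comp_emb emb).2 h2
    rw [hprodmeas] at h3
    exact h3
  calc ∫ p in Ioi (0:ℝ) ×ˢ Ioi (0:ℝ), g p.1 * h (p.1 + p.2) ∂ρ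
      = ∫ p, g p.1 * h (p.1 + p.2)
        ∂((volume.restrict (Ioi (0:ℝ))).prod (volume.restrict (Ioi (0:ℝ)))) := by
        rw [← hprodmeas]
    _ = ∫ t in Ioi (0:ℝ), ∫ x in Ioi (0:ℝ), g x * h (x + t) :=
        integral_prod_symm _ hint

/-- The auxiliary identity (40): for integrable `g, h` on `(0,∞)`,
`(∫₀^∞ g)(∫₀^∞ h) = ∫₀^∞∫₀^∞ g(x)h(x+t) dx dt + ∫₀^∞∫₀^∞ h(x)g(x+t) dx dt`. -/
theorem product_integrals_convolution_split
    (g h : ℝ → ℂ) (hgm : Measurable g) (hhm : Measurable h)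
    (hg : IntegrableOn g (Ioi 0)) (hh : IntegrableOn h (Ioi 0)) :
    (∫ x in Ioi (0:ℝ), g x) * (∫ x in Ioi (0:ℝ), h x) =
      (∫ t in Ioi (0:ℝ), ∫ x in Ioi (0:ℝ), g x * h (x + t)) +
        (∫ t in Ioi (0:ℝ), ∫ x in Ioi (0:ℝ), h x * g (x + t)) := by
  set ρ : Measure (ℝ × ℝ) := (volume : Measure ℝ).prod volume with hρ
  set S : Set (ℝ × ℝ) := Ioi (0:ℝ) ×ˢ Ioi (0:ℝ) with hS
  set A : Set (ℝ × ℝ) := {p : ℝ × ℝ | p.1 < p.2} with hA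
  set B : Set (ℝ × ℝ) := {p : ℝ × ℝ | p.2 < p.1} with hB
  have hAm : MeasurableSet A := measurableSet_lt measurable_fst measurable_snd
  have hprodmeas : ρ.restrict S
      = (volume.restrict (Ioi (0:ℝ))).prod (volume.restrict (Ioi (0:ℝ))) := by
    rw [Measure.prod_restrict]
  have hFint : Integrable (fun p : ℝ × ℝ => g p.1 * h p.2) (ρ.restrict S) := by
    rw [hprodmeas]; exact hg.mul_prod hh
  -- the diagonal is null
  have hdiag : ρ {p : ℝ × ℝ | p.1 = p.2} = 0 := by
    have hD : MeasurableSet {p : ℝ × ℝ | p.1 = p.2} :=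
      measurableSet_eq_fun measurable_fst measurable_snd
    rw [hρ, Measure.prod_apply hD]
    have hz : ∀ x : ℝ, (volume : Measure ℝ) (Prod.mk x ⁻¹' {p : ℝ × ℝ | p.1 = p.2}) = 0 := by
      intro x
      have : Prod.mk x ⁻¹' {p : ℝ × ℝ | p.1 = p.2} = {x} := by
        ext y; simp [eq_comm]
      rw [this]; exact measure_singleton x
    simp [hz]
  -- split the integral over A and Aᶜ
  have hsplit : (∫ p, g p.1 * h p.2 ∂(ρ.restrict S)) =
      (∫ p in A ∩ S, g p.1 * h p.2 ∂ρ) + (∫ p in B ∩ S, g p.1 * h p.2 ∂ρ) := by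
    have h1 := integral_add_compl hAm hFint
    have h2 : (∫ p in A, g p.1 * h p.2 ∂(ρ.restrict S)) =
        ∫ p in A ∩ S, g p.1 * h p.2 ∂ρ := by
      rw [Measure.restrict_restrict hAm]
    have h3 : (∫ p in Aᶜ, g p.1 * h p.2 ∂(ρ.restrict S)) =
        ∫ p in B ∩ S, g p.1 * h p.2 ∂ρ := by
      rw [Measure.restrict_restrict hAm.compl]
      apply setIntegral_congr_set
      rw [MeasureTheory.ae_eq_set]
      refine ⟨measure_mono_null ?_ hdiag, measure_mono_null ?_ hdiag⟩
      · rintro ⟨x, y⟩ ⟨⟨hac, hs⟩, hnb⟩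
        have hxy : ¬ (x:ℝ) < y := hac
        have hyx : ¬ (y:ℝ) < x := fun hlt => hnb ⟨hlt, hs⟩
        exact le_antisymm (not_lt.1 hyx) (not_lt.1 hxy)
      · rintro ⟨x, y⟩ ⟨⟨hb, hs⟩, hna⟩
        have hb' : (y:ℝ) < x := hb
        have hmem : (x, y) ∈ Aᶜ := fun hmem => not_lt_of_gt hb' hmem
        exact (hna ⟨hmem, hs⟩).elim
    rw [← h1, h2, h3]
  -- the B part equals the A part with g and h swapped
  have hswap : (∫ p in B ∩ S, g p.1 * h p.2 ∂ρ) =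
      ∫ p in A ∩ S, h p.1 * g p.2 ∂ρ := by
    have mps : MeasurePreserving (Prod.swap : ℝ × ℝ → ℝ × ℝ) ρ ρ :=
      Measure.measurePreserving_swap
    have embs : MeasurableEmbedding (Prod.swap : ℝ × ℝ → ℝ × ℝ) :=
      MeasurableEquiv.prodComm.measurableEmbedding
    have key := mps.setIntegral_preimage_emb embs
      (fun p : ℝ × ℝ => g p.1 * h p.2) (B ∩ S)
    have hpre : (Prod.swap : ℝ × ℝ → ℝ × ℝ) ⁻¹' (B ∩ S) = A ∩ S := by
      ext ⟨x, y⟩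
      simp only [Set.mem_preimage, Prod.swap_prod_mk, Set.mem_inter_iff, hA, hB, hS,
        Set.mem_setOf_eq, Set.mem_prod, Set.mem_Ioi]
      tauto
    rw [hpre] at key
    rw [← key]
    exact setIntegral_congr_fun (hAm.inter ((measurableSet_Ioi).prod measurableSet_Ioi))
      (fun p _ => mul_comm _ _)
  have hLHS : (∫ x in Ioi (0:ℝ), g x) * (∫ x in Ioi (0:ℝ), h x) =
      ∫ p, g p.1 * h p.2 ∂(ρ.restrict S) := by
    rw [hprodmeas]
    exact (integral_prod_mul _ _).symm
  rw [hLHS, hsplit, hswap, hA, hS, aux_half g h hg hh, aux_half h g hh hg]
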